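/- Let n = p_1^{n_1}⋯p_r^{n_r} with r ≥ 2 and primes p_1 < ... < p_r, and let i < k in [r]. Then φ(n/p_i) ≥ p_k^{n_k - 1}·φ(n/p_k^{n_k}), with strict inequality unless (i,k) = (1,2), (p_1,p_2) = (2,3) and n_1 ≥ 2. -/

import Mathlib

theorem key_lem (a b e f : ℕ) (ha : a.Prime) (hb : b.Prime) (hab : a < b)
    (he : 1 ≤ e) (hf : 1 ≤ f) :
    b ^ (f-1) * (Nat.totient (a^e)) ≤ Nat.totient (a^(e-1)) * Nat.totient (b^f) ∧
    (Nat.totient (a^(e-1)) * Nat.totient (b^f) = b ^ (f-1) * Nat.totient (a^e) →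
      a = 2 ∧ b = 3 ∧ 2 ≤ e) := by
  have ha2 : 2 ≤ a := ha.two_le
  have hbpos : 0 < b ^ (f-1) := Nat.pow_pos hb.pos
  rw [Nat.totient_prime_pow ha he, Nat.totient_prime_pow hb hf]
  rcases Nat.lt_or_ge e 2 with h2 | h2
  · have he1 : e = 1 := by omega
    subst he1
    simp only [Nat.sub_self, pow_zero, Nat.totient_one, one_mul]
    constructor
    · have : a - 1 ≤ b - 1 := by omega
      exact Nat.mul_le_mul_left _ this
    · intro hEq
      exfalso
      have h1 : b ^ (f-1) * (b-1) = b ^ (f-1) * (a-1) := by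
        rw [hEq]
      have := Nat.eq_of_mul_eq_mul_left hbpos h1
      omega
  · rw [Nat.totient_prime_pow ha (show 1 ≤ e - 1 by omega)]
    have hsplit : a ^ (e-1) = a^(e-1-1) * a := by
      rw [← pow_succ]; congr 1; omega
    rw [hsplit]
    set x := a ^ (e-1-1) with hx
    set y := b ^ (f-1) with hy
    have hxpos : 0 < x := Nat.pow_pos ha.pos
    have hba : a ≤ b - 1 := by omega
    constructor
    · calc y * (x * a * (a-1)) = (x * (a-1) * y) * a := by ring
        _ ≤ (x * (a-1) * y) * (b-1) := Nat.mul_le_mul_left _ hba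
        _ = x * (a-1) * (y * (b-1)) := by ring
    · intro hEq
      have hpos : 0 < x * (a-1) * y := Nat.mul_pos (Nat.mul_pos hxpos (by omega)) hbpos
      have h1 : (x * (a-1) * y) * (b-1) = (x * (a-1) * y) * a := by
        calc (x * (a-1) * y) * (b-1) = x * (a-1) * (y * (b-1)) := by ring
          _ = y * (x * a * (a-1)) := hEq
          _ = (x * (a-1) * y) * a := by ring
      have hb1a : b - 1 = a := Nat.eq_of_mul_eq_mul_left hpos h1
      have hba1 : b = a + 1 := by omega
      rcases ha.eq_two_or_odd' with h | h
      · refine ⟨h, by omega, h2⟩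
      · exfalso
        have hbe : Even b := by rw [hba1]; exact h.add_one
        have := (Nat.Prime.even_iff hb).mp hbe
        omega

theorem stmt_8 (r : ℕ) (hr : 2 ≤ r) (p e : ℕ → ℕ)
    (hp : ∀ i < r, (p i).Prime)
    (hmono : ∀ i j, i < j → j < r → p i < p j)
    (he : ∀ i < r, 1 ≤ e i)
    (n : ℕ) (hn : n = ∏ i ∈ Finset.range r, p i ^ e i)
    (i k : ℕ) (hik : i < k) (hk : k < r) :
    Nat.totient (n / p i) ≥ p k ^ (e k - 1) * Nat.totient (n / p k ^ e k) ∧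
    (Nat.totient (n / p i) = p k ^ (e k - 1) * Nat.totient (n / p k ^ e k) →
      i = 0 ∧ k = 1 ∧ p 0 = 2 ∧ p 1 = 3 ∧ 2 ≤ e 0) := by
  have hi : i < r := lt_trans hik hk
  have hpi : (p i).Prime := hp i hi
  have hpk : (p k).Prime := hp k hk
  have hik' : p i < p k := hmono i k hik hk
  have hne : i ≠ k := Nat.ne_of_lt hik
  -- set up the decomposition
  set s : Finset ℕ := ((Finset.range r).erase i).erase k with hs
  set M : ℕ := ∏ j ∈ s, p j ^ e j with hM
  have hkmem : k ∈ (Finset.range r).erase i :=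
    Finset.mem_erase.mpr ⟨(Ne.symm hne), Finset.mem_range.mpr hk⟩
  have hdecomp : n = p i ^ e i * (p k ^ e k * M) := by
    rw [hn, ← Finset.mul_prod_erase _ _ (Finset.mem_range.mpr hi),
      ← Finset.mul_prod_erase _ _ hkmem]
  -- distinct primes
  have hne_p : ∀ j ∈ s, p j ≠ p i ∧ p j ≠ p k := by
    intro j hj
    have hj1 := Finset.mem_erase.mp hj
    have hj2 := Finset.mem_erase.mp hj1.2
    have hjr : j < r := Finset.mem_range.mp hj2.2
    constructor
    · rcases Nat.lt_or_ge j i with h | h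
      · exact Nat.ne_of_lt (hmono j i h hi)
      · exact Ne.symm (Nat.ne_of_lt (hmono i j (by omega) hjr))
    · rcases Nat.lt_or_ge j k with h | h
      · exact Nat.ne_of_lt (hmono j k h hk)
      · exact Ne.symm (Nat.ne_of_lt (hmono k j (by omega) hjr))
  have hcopM : ∀ q : ℕ, q.Prime → (∀ j ∈ s, p j ≠ q) → ∀ a : ℕ, (q ^ a).Coprime M := by
    intro q hq hqj a
    apply Nat.Coprime.pow_left
    apply Nat.Coprime.prod_right
    intro j hj
    apply Nat.Coprime.pow_right
    exact ((Nat.coprime_primes hq (hp j (Finset.mem_range.mp (Finset.mem_erase.mp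
      (Finset.mem_erase.mp hj).2).2))).mpr (fun h => hqj j hj h.symm))
  have hcopiM : ∀ a, ((p i) ^ a).Coprime M :=
    hcopM (p i) hpi (fun j hj => (hne_p j hj).1)
  have hcopkM : ∀ a, ((p k) ^ a).Coprime M :=
    hcopM (p k) hpk (fun j hj => (hne_p j hj).2)
  have hcopik : ∀ a b, ((p i) ^ a).Coprime ((p k) ^ b) :=
    fun a b => ((Nat.coprime_primes hpi hpk).mpr (Nat.ne_of_lt hik')).pow a b
  -- compute n / p i
  have hei : 1 ≤ e i := he i hi
  have hek : 1 ≤ e k := he k hk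
  have hni : n / p i = p i ^ (e i - 1) * (p k ^ e k * M) := by
    have hps : p i ^ e i = p i * p i ^ (e i - 1) := by
      conv_lhs => rw [show e i = 1 + (e i - 1) by omega]
      rw [pow_add, pow_one]
    have : n = p i * (p i ^ (e i - 1) * (p k ^ e k * M)) := by
      rw [hdecomp, hps, mul_assoc]
    rw [this, Nat.mul_div_cancel_left _ hpi.pos]
  have hnk : n / p k ^ e k = p i ^ e i * M := by
    rw [hdecomp]
    rw [show p i ^ e i * (p k ^ e k * M) = p k ^ e k * (p i ^ e i * M) by ring]
    exact Nat.mul_div_cancel_left _ (Nat.pow_pos hpk.pos)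
  have hti : Nat.totient (n / p i)
      = Nat.totient (p i ^ (e i - 1)) * Nat.totient (p k ^ e k) * Nat.totient M := by
    rw [hni, Nat.totient_mul (Nat.Coprime.mul_right (hcopik _ _) (hcopiM _)),
      Nat.totient_mul (hcopkM _), mul_assoc]
  have htk : Nat.totient (n / p k ^ e k)
      = Nat.totient (p i ^ e i) * Nat.totient M := by
    rw [hnk, Nat.totient_mul (hcopiM _)]
  obtain ⟨hle, heq⟩ := key_lem (p i) (p k) (e i) (e k) hpi hpk hik' hei hek
  have hMpos : 0 < Nat.totient M := by
    apply Nat.totient_pos.mpr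
    apply Finset.prod_pos
    intro j hj
    exact Nat.pow_pos (hp j (Finset.mem_range.mp (Finset.mem_erase.mp
      (Finset.mem_erase.mp hj).2).2)).pos
  constructor
  · rw [hti, htk]
    calc p k ^ (e k - 1) * (Nat.totient (p i ^ e i) * Nat.totient M)
        = (p k ^ (e k - 1) * Nat.totient (p i ^ e i)) * Nat.totient M := by ring
      _ ≤ (Nat.totient (p i ^ (e i - 1)) * Nat.totient (p k ^ e k)) * Nat.totient M :=
          Nat.mul_le_mul_right _ hle
  · intro hEq
    rw [hti, htk] at hEq
    rw [← mul_assoc] at hEq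
    have hEq' : Nat.totient (p i ^ (e i - 1)) * Nat.totient (p k ^ e k)
        = p k ^ (e k - 1) * Nat.totient (p i ^ e i) :=
      Nat.eq_of_mul_eq_mul_right hMpos hEq
    obtain ⟨h2, h3, hee⟩ := heq hEq'
    have hi0 : i = 0 := by
      by_contra h0
      have : p 0 < p i := hmono 0 i (by omega) hi
      have := (hp 0 (by omega)).two_le
      omega
    have hk1 : k = 1 := by
      by_contra h1
      have hk2 : 2 ≤ k := by omega
      have h01 : p 0 < p 1 := hmono 0 1 (by omega) (by omega)
      have h1k : p 1 < p k := hmono 1 k (by omega) hk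
      have := (hp 0 (by omega)).two_le
      omega
    exact ⟨hi0, hk1, hi0 ▸ h2, hk1 ▸ h3, hi0 ▸ hee⟩
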